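/- arXiv:2203.16712 — 7 statements merged into one kernel-verified Lean document; each statement's English description precedes it below -/
import Mathlib

section
/- For any finite simple graph G (irreflexive symmetric relation on a finite vertex set): if G has an odd closed walk of length p and G admits a cyclic polymorphism of arity p, then G has a loop, i.e., some vertex adjacent to itself. Consequently, a finite simple (loopless) graph that admits cyclic polymorphisms of arbitrarily large prime arities is bipartite. -/
/-- A cyclic polymorphism of arity `p` of a graph `Adj`. -/
def IsCyclicPolymorphism {V : Type*} (Adj : V → V → Prop) (p : ℕ) (c : (ZMod p → V) → V) : Prop :=
  (∀ x y : ZMod p → V, (∀ i, Adj (x i) (y i)) → Adj (c x) (c y)) ∧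
  (∀ x : ZMod p → V, c (fun i => x (i + 1)) = c x)

/-- A closed walk of length `p` in the graph `Adj`. -/
def IsClosedWalk {V : Type*} (Adj : V → V → Prop) (p : ℕ) (x : ZMod p → V) : Prop :=
  ∀ i, Adj (x i) (x (i + 1))

open SimpleGraph

lemma walk_to_closedwalk {V : Type*} (G : SimpleGraph V) {a : V} (w : G.Walk a a)
    {p : ℕ} (hp : 1 < p) (hl : w.length = p) :
    ∃ x : ZMod p → V, ∀ i : ZMod p, G.Adj (x i) (x (i + 1)) := by
  haveI : NeZero p := ⟨by omega⟩
  refine ⟨fun i => w.getVert i.val, fun i => ?_⟩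
  have hv : i.val < p := ZMod.val_lt i
  have hadd : (i + 1).val = (i.val + 1) % p := by
    rw [ZMod.val_add, ZMod.val_one'' (by omega)]
  show G.Adj (w.getVert i.val) (w.getVert (i + 1).val)
  by_cases h : i.val + 1 < p
  · have he : (i + 1).val = i.val + 1 := by rw [hadd]; exact Nat.mod_eq_of_lt h
    rw [he]
    exact w.adj_getVert_succ (i := i.val) (by omega)
  · have hip : i.val + 1 = p := by omega
    have h0 : (i + 1).val = 0 := by rw [hadd, hip, Nat.mod_self]
    have hlast : i.val + 1 = w.length := by omega
    have := w.adj_getVert_succ (i := i.val) (by omega)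
    rw [hlast, w.getVert_length] at this
    rw [h0]
    simpa [Walk.getVert_zero] using this

lemma walk_extend {V : Type*} (G : SimpleGraph V) {a : V} (w : G.Walk a a)
    (hw : 1 ≤ w.length) (k : ℕ) :
    ∃ w' : G.Walk a a, w'.length = w.length + 2 * k := by
  induction k with
  | zero => exact ⟨w, by omega⟩
  | succ n ih =>
    obtain ⟨w', hw'⟩ := ih
    cases w with
    | nil => simp at hw
    | @cons _ b _ h q =>
      exact ⟨Walk.cons h (Walk.cons h.symm w'), by
        simp only [Walk.length_cons] at hw' ⊢; omega⟩

lemma no_coloring_odd_walk {V : Type*} (G : SimpleGraph V)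
    (h : ∀ f : V → Bool, ∃ u v, G.Adj u v ∧ f u = f v) :
    ∃ (a : V) (w : G.Walk a a), Odd w.length := by
  have hr : ∀ v : V, G.Reachable (G.connectedComponentMk v).out v :=
    fun v => ConnectedComponent.exact (Quot.out_eq _)
  classical
  set f : V → Bool := fun v => decide (Odd (Classical.choice (hr v)).length) with hf
  obtain ⟨u, v, huv, hfe⟩ := h f
  have hc : G.connectedComponentMk v = G.connectedComponentMk u :=
    (ConnectedComponent.connectedComponentMk_eq_of_adj huv).symm
  set b := (G.connectedComponentMk u).out with hb
  set wu := Classical.choice (hr u) with hwu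
  set wv : G.Walk b v := (Classical.choice (hr v)).copy (by rw [hc]) rfl with hwv
  refine ⟨b, wu.append (Walk.cons huv wv.reverse), ?_⟩
  have hpar : Odd wu.length ↔ Odd ((Classical.choice (hr v)).length) := by
    simp only [hf, decide_eq_decide] at hfe
    rw [hwu]
    exact hfe
  have hlen : wv.length = (Classical.choice (hr v)).length := by
    rw [hwv]; exact Walk.length_copy _ _ _
  simp only [Walk.length_append, Walk.length_cons, Walk.length_reverse]
  simp only [Nat.odd_iff] at hpar ⊢
  rw [← hlen] at hpar
  omega

/-- If a finite graph has an odd closed walk of length `p` and a cyclic polymorphism of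
arity `p`, then it has a loop.  Consequently a finite loopless (simple) graph admitting
cyclic polymorphisms of arbitrarily large prime arities is bipartite. -/
theorem cyclic_polymorphism_loop_and_bipartite {V : Type*} [Fintype V]
    (Adj : V → V → Prop) (hsymm : ∀ u v, Adj u v → Adj v u) :
    (∀ p : ℕ, 0 < p → Odd p →
      (∃ x : ZMod p → V, IsClosedWalk Adj p x) →
      (∃ c, IsCyclicPolymorphism Adj p c) →
      ∃ v, Adj v v) ∧
    ((∀ v, ¬ Adj v v) →
      (∀ N : ℕ, ∃ p : ℕ, N ≤ p ∧ p.Prime ∧ ∃ c, IsCyclicPolymorphism Adj p c) →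
      ∃ f : V → Bool, ∀ u v, Adj u v → f u ≠ f v) := by
  have part1 : ∀ p : ℕ, 0 < p → Odd p →
      (∃ x : ZMod p → V, IsClosedWalk Adj p x) →
      (∃ c, IsCyclicPolymorphism Adj p c) → ∃ v, Adj v v := by
    rintro p _ _ ⟨x, hx⟩ ⟨c, hc1, hc2⟩
    have := hc1 x (fun i => x (i + 1)) hx
    rw [hc2] at this
    exact ⟨c x, this⟩
  refine ⟨part1, fun hloop hpoly => ?_⟩
  by_contra hnf
  push_neg at hnf
  set G : SimpleGraph V := ⟨Adj, ⟨fun u v h => hsymm u v h⟩, ⟨fun v h => hloop v h⟩⟩ with hG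
  obtain ⟨a, w, hodd⟩ := no_coloring_odd_walk G (fun f => by
    obtain ⟨u, v, huv, hfe⟩ := hnf f
    exact ⟨u, v, huv, hfe⟩)
  obtain ⟨p, hpN, hpp, c, hc⟩ := hpoly (max w.length 3)
  have hp3 : 3 ≤ p := le_trans (le_max_right _ _) hpN
  have hpodd : Odd p := hpp.odd_of_ne_two (by omega)
  have hwle : w.length ≤ p := le_trans (le_max_left _ _) hpN
  rw [Nat.odd_iff] at hpodd hodd
  obtain ⟨w', hw'⟩ := walk_extend G w (by omega) ((p - w.length) / 2)
  have hw'len : w'.length = p := by rw [hw']; omega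
  obtain ⟨x, hx⟩ := walk_to_closedwalk G w' (by omega) hw'len
  obtain ⟨v, hv⟩ := part1 p (by omega) (Nat.odd_iff.mpr hpodd) ⟨x, hx⟩ ⟨c, hc⟩
  exact hloop v hv
end

section
/- Let D be a finite relational structure that is a core (every homomorphism D → D is an automorphism), and let c ∈ D. Define H(x₁,...,xₙ) to hold iff the map d ↦ x_d is an endomorphism of D (where D = {1,...,n} and c = 1). Then for all a, b ∈ D: there exist x₂,...,xₙ with H(a,x₂,...,xₙ) and H(b,x₂,...,xₙ) if and only if a = b and some automorphism of D sends c to a. -/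
/-- `g` is an endomorphism of the relational structure `(D, Rel)`. -/
def IsEndo {D : Type*} {ι : Type*} {ar : ι → ℕ}
    (Rel : ∀ i, Set (Fin (ar i) → D)) (g : D → D) : Prop :=
  ∀ i, ∀ t ∈ Rel i, (g ∘ t) ∈ Rel i

/-- For a finite core `D` with element `c`: two tuples that agree off `c` and define
endomorphisms when their value at `c` is `a` resp. `b` exist iff `a = b` and some
automorphism of `D` sends `c` to `a`.  (This is the simple definability of `=_c`.) -/
theorem core_eq_c_simple_definition {D : Type*} [Fintype D] [DecidableEq D]
    {ι : Type*} {ar : ι → ℕ} (Rel : ∀ i, Set (Fin (ar i) → D))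
    (hcore : ∀ g : D → D, IsEndo Rel g → Function.Bijective g)
    (c : D) (a b : D) :
    (∃ x : D → D, IsEndo Rel (Function.update x c a) ∧ IsEndo Rel (Function.update x c b))
      ↔ (a = b ∧ ∃ f : D → D, IsEndo Rel f ∧ Function.Bijective f ∧ f c = a) := by
  constructor
  · rintro ⟨x, h1, h2⟩
    have b1 := hcore _ h1
    have b2 := hcore _ h2
    have hab : a = b := by
      by_contra hab
      obtain ⟨d, hd⟩ := b2.2 a
      have hdc : d ≠ c := by
        intro h; rw [h, Function.update_self] at hd; exact hab hd.symm
      have heq : Function.update x c a d = Function.update x c a c := by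
        rw [Function.update_self, Function.update_of_ne hdc]
        rw [Function.update_of_ne hdc] at hd
        exact hd
      exact hdc (b1.1 heq)
    exact ⟨hab, Function.update x c a, h1, b1, Function.update_self _ _ _⟩
  · rintro ⟨rfl, f, hf, _, hfc⟩
    refine ⟨f, ?_, ?_⟩ <;> rw [← hfc, Function.update_eq_self] <;> exact hf
end

section
/- Let D be a finite structure with a ternary dual discriminator polymorphism T (T(x,y,z) = the repeated value among x,y,z if one exists, else x). If R ⊆ Dⁿ is preserved by T, then R is determined by its binary projections: for any tuple a ∈ Dⁿ, if π_{i,j}(a) ∈ π_{i,j}(R) for all pairs i,j, then a ∈ R. -/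
/-- The dual discriminator: the repeated value among `x, y, z` if there is one, else `x`. -/
def dualDiscriminator {D : Type*} [DecidableEq D] (x y z : D) : D :=
  if y = z then y else x

/-- A relation preserved by the dual discriminator is determined by its binary projections:
if every pair of coordinates of `a` is matched by some tuple of `R`, then `a ∈ R`. -/
theorem dual_discriminator_binary_projections {D : Type*} [Fintype D] [DecidableEq D]
    {n : ℕ} (hn : 0 < n) (R : Set (Fin n → D))
    (hR : ∀ x ∈ R, ∀ y ∈ R, ∀ z ∈ R,
      (fun i => dualDiscriminator (x i) (y i) (z i)) ∈ R)
    (a : Fin n → D)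
    (ha : ∀ i j : Fin n, ∃ b ∈ R, b i = a i ∧ b j = a j) :
    a ∈ R := by
  suffices h : ∀ J : Finset (Fin n), ∃ b ∈ R, ∀ i ∈ J, b i = a i by
    obtain ⟨b, hbR, hb⟩ := h Finset.univ
    have : b = a := funext fun i => hb i (Finset.mem_univ i)
    rwa [← this]
  intro J
  induction J using Finset.strongInduction with
  | _ J IH =>
    by_cases hcard : J.card ≤ 2
    · -- small cases
      interval_cases h : J.card
      · obtain rfl : J = ∅ := Finset.card_eq_zero.mp h
        obtain ⟨b, hbR, _⟩ := ha ⟨0, hn⟩ ⟨0, hn⟩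
        exact ⟨b, hbR, fun i hi => absurd hi (Finset.notMem_empty i)⟩
      · obtain ⟨i, rfl⟩ := Finset.card_eq_one.mp h
        obtain ⟨b, hbR, hb1, _⟩ := ha i i
        exact ⟨b, hbR, fun l hl => by rw [Finset.mem_singleton] at hl; subst hl; exact hb1⟩
      · obtain ⟨i, j, hij, rfl⟩ := Finset.card_eq_two.mp h
        obtain ⟨b, hbR, hb1, hb2⟩ := ha i j
        refine ⟨b, hbR, fun l hl => ?_⟩
        rcases Finset.mem_insert.mp hl with rfl | hl
        · exact hb1
        · rw [Finset.mem_singleton] at hl; subst hl; exact hb2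
    · push_neg at hcard
      -- find three distinct elements i j k in J
      obtain ⟨i, hi⟩ := Finset.card_pos.mp (show 0 < J.card by omega)
      have h2 : 0 < (J.erase i).card := by
        rw [Finset.card_erase_of_mem hi]; omega
      obtain ⟨j, hj⟩ := Finset.card_pos.mp h2 -- fine
      have h3 : 0 < ((J.erase i).erase j).card := by
        rw [Finset.card_erase_of_mem hj, Finset.card_erase_of_mem hi]; omega
      obtain ⟨k, hk⟩ := Finset.card_pos.mp h3
      have hjJ : j ∈ J := Finset.mem_of_mem_erase hj
      have hkJ : k ∈ J := Finset.mem_of_mem_erase (Finset.mem_of_mem_erase hk)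
      have hji : j ≠ i := Finset.ne_of_mem_erase hj
      have hkj : k ≠ j := Finset.ne_of_mem_erase hk
      have hki : k ≠ i := Finset.ne_of_mem_erase (Finset.mem_of_mem_erase hk)
      obtain ⟨x, hxR, hx⟩ := IH (J.erase i) (Finset.erase_ssubset hi)
      obtain ⟨y, hyR, hy⟩ := IH (J.erase j) (Finset.erase_ssubset hjJ)
      obtain ⟨z, hzR, hz⟩ := IH (J.erase k) (Finset.erase_ssubset hkJ)
      refine ⟨_, hR x hxR y hyR z hzR, fun l hl => ?_⟩
      simp only [dualDiscriminator]
      split_ifs with hyz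
      · -- result is y l
        by_cases hlj : l = j
        · subst hlj
          rw [hyz]
          exact hz l (Finset.mem_erase.mpr ⟨hkj.symm, hl⟩)
        · exact hy l (Finset.mem_erase.mpr ⟨hlj, hl⟩)
      · -- y l ≠ z l, so l ≠ i
        by_cases hli : l = i
        · subst hli
          exact absurd ((hy l (Finset.mem_erase.mpr ⟨hji.symm, hl⟩)).trans
            (hz l (Finset.mem_erase.mpr ⟨hki.symm, hl⟩)).symm) hyz
        · exact hx l (Finset.mem_erase.mpr ⟨hli, hl⟩)
end

section
/- Every Baire measurable function g : {1,...,n}^ℕ → D (D finite) is constant on some 'fan': there exist σ ∈ {1,...,n}^{<ℕ} (from any fixed dense family of finite strings) and t ∈ {1,...,n}^ℕ such that g(σ ⌢ ⟨1⟩ ⌢ t) = g(σ ⌢ ⟨2⟩ ⌢ t) = ... = g(σ ⌢ ⟨n⟩ ⌢ t). -/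
/-- The point `σ ⌢ ⟨k⟩ ⌢ t` of `(Fin n)^ℕ`: the finite string `σ` of length `i`, followed by
the single symbol `k`, followed by the infinite string `t`. -/
def fanPoint {n : ℕ} (i : ℕ) (σ : Fin i → Fin n) (k : Fin n) (t : ℕ → Fin n) : ℕ → Fin n :=
  fun m => if h : m < i then σ ⟨m, h⟩ else if m = i then k else t (m - i - 1)

open Topology Filter Set

/-- Every Baire measurable function `g : {1,...,n}^ℕ → D` (`D` finite) is constant on some
fan: there are a string `σᵢ` from the fixed dense family and a tail `t` such that all the
values `g (σᵢ ⌢ ⟨k⟩ ⌢ t)`, `k = 1,...,n`, coincide. -/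
theorem baire_measurable_constant_on_fan {n : ℕ} (hn : 0 < n)
    {D : Type*} [Finite D]
    (σ : (i : ℕ) → Fin i → Fin n)
    (hdense : ∀ (m : ℕ) (s : Fin m → Fin n),
      ∃ i, ∃ h : m ≤ i, ∀ j : Fin m, σ i (Fin.castLE h j) = s j)
    (g : (ℕ → Fin n) → D)
    (hg : ∀ a : D, BaireMeasurableSet (g ⁻¹' {a})) :
    ∃ (i : ℕ) (t : ℕ → Fin n), ∀ k₁ k₂ : Fin n,
      g (fanPoint i (σ i) k₁ t) = g (fanPoint i (σ i) k₂ t) := by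
  classical
  haveI : NeZero n := ⟨hn.ne'⟩
  haveI : BaireSpace (ℕ → Fin n) := BaireSpace.of_t2Space_locallyCompactSpace
  haveI : Countable D := Finite.to_countable
  -- nonempty open sets are nonmeager
  have key : ∀ V : Set (ℕ → Fin n), IsOpen V → V.Nonempty → ¬ IsMeagre V := by
    intro V hV ⟨v, hv⟩ hmV
    have hd : Dense Vᶜ := dense_of_mem_residual hmV
    have : Vᶜ = univ := hV.isClosed_compl.closure_eq ▸ hd.closure_eq
    exact absurd (this ▸ mem_univ v) (by simp [hv])
  -- some fiber of g is nonmeager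
  obtain ⟨a, ha⟩ : ∃ a : D, ¬ IsMeagre (g ⁻¹' {a}) := by
    by_contra h
    push_neg at h
    have h1 : (⋂ a : D, (g ⁻¹' {a})ᶜ) ∈ residual (ℕ → Fin n) :=
      countable_iInter_mem.mpr fun a => h a
    have h2 : (⋂ a : D, (g ⁻¹' {a})ᶜ) = ∅ := by
      ext x; simp
    exact key univ isOpen_univ ⟨fun _ => 0, mem_univ _⟩ (by rwa [IsMeagre, compl_univ, ← h2])
  set S : Set (ℕ → Fin n) := g ⁻¹' {a} with hS
  -- S is comeager in some open set U
  obtain ⟨U, hUo, hSU⟩ := (hg a).residualEq_isOpen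
  have hUS : IsMeagre (U \ S) := by
    rw [IsMeagre]
    refine mem_of_superset hSU fun x hx => ?_
    simp only [eq_iff_iff] at hx
    simp only [mem_compl_iff, mem_diff, not_and, not_not]
    exact fun hxU => hx.mpr hxU
  -- U is nonempty (else S would be meager)
  obtain ⟨x, hxU⟩ : U.Nonempty := by
    rcases U.eq_empty_or_nonempty with h | h
    · exfalso
      apply ha
      rw [IsMeagre]
      refine mem_of_superset hSU.symm fun y hy => ?_
      simp only [eq_iff_iff] at hy
      simp only [mem_compl_iff, hS, mem_preimage, mem_singleton_iff]
      intro hgy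
      have : y ∈ U := hy.mpr hgy
      simp [h] at this
    · exact h
  -- find a basic cylinder around x inside U
  obtain ⟨I, u, hu, hsub⟩ := isOpen_pi_iff.mp hUo x hxU
  set m : ℕ := I.sup Nat.succ with hm
  have hIm : ∀ j ∈ I, j < m := fun j hj => Nat.lt_of_succ_le (Finset.le_sup (f := Nat.succ) hj)
  -- a string from the dense family extending x's first m coordinates
  obtain ⟨i, hmi, hσ⟩ := hdense m (fun j => x j)
  set k₀ : Fin n := 0 with hk₀
  -- the basic neighborhood V
  set V : Set (ℕ → Fin n) := {y | (∀ j : Fin i, y j = σ i j) ∧ y i = k₀} with hV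
  have hVo : IsOpen V := by
    have : V = ((Finset.range (i+1) : Finset ℕ) : Set ℕ).pi
        (fun j => {if h : j < i then σ i ⟨j, h⟩ else k₀}) := by
      ext y
      simp only [hV, mem_setOf_eq, Finset.coe_range, Set.mem_pi, mem_Iio, mem_singleton_iff]
      constructor
      · rintro ⟨h1, h2⟩ j hj
        by_cases h : j < i
        · simpa [h] using h1 ⟨j, h⟩
        · have : j = i := by omega
          simp [h, this, h2]
      · intro h
        constructor
        · intro j
          have := h j (by omega)
          simpa [j.isLt] using this
        · have := h i (by omega)
          simpa using this
    rw [this]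
    exact isOpen_set_pi (Finset.range (i+1)).finite_toSet (fun j _ => isOpen_discrete _)
  have hVne : V.Nonempty := by
    refine ⟨fanPoint i (σ i) k₀ (fun _ => k₀), ?_, ?_⟩
    · intro j
      simp [fanPoint, j.isLt]
    · simp [fanPoint]
  -- the coordinate-permuting homeomorphisms
  set Φ : Fin n → (ℕ → Fin n) → (ℕ → Fin n) :=
    fun k y m => if m = i then Equiv.swap k₀ k (y m) else y m with hΦ
  have hΦcont : ∀ k, Continuous (Φ k) := by
    intro k
    apply continuous_pi
    intro m
    by_cases hmi' : m = i
    · simp only [hΦ, hmi', if_pos rfl]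
      exact (continuous_of_discreteTopology (f := Equiv.swap k₀ k)).comp (continuous_apply i)
    · simp only [hΦ, if_neg hmi']
      exact continuous_apply m
  have hΦinv : ∀ k, Function.Involutive (Φ k) := by
    intro k y
    funext m
    by_cases hmi' : m = i <;> simp [hΦ, hmi', Equiv.swap_apply_self]
  have hΦopen : ∀ k, IsOpenMap (Φ k) := by
    intro k
    have : Φ k = ⇑(Homeomorph.mk ((hΦinv k).toPerm _) (hΦcont k) (hΦcont k)) := rfl
    rw [this]
    exact (Homeomorph.mk _ _ _).isOpenMap
  -- Φ k maps V into U
  have hΦV : ∀ k, ∀ y ∈ V, Φ k y ∈ U := by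
    intro k y hy
    apply hsub
    intro j hj
    have hjm : j < m := hIm j hj
    have hji : j < i := lt_of_lt_of_le hjm hmi
    have h1 : Φ k y j = y j := by simp [hΦ, hji.ne]
    have h2 : y j = σ i ⟨j, hji⟩ := hy.1 ⟨j, hji⟩
    have h3 : σ i ⟨j, hji⟩ = x j := hσ ⟨j, hjm⟩
    rw [h1, h2, h3]
    exact (hu j hj).2
  -- each V \ Φ k ⁻¹' S is meager
  have hmeag : ∀ k, IsMeagre (V \ Φ k ⁻¹' S) := by
    intro k
    refine IsMeagre.mono ?_ (hUS.preimage_of_isOpenMap (hΦcont k) (hΦopen k))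
    rintro y ⟨hyV, hyS⟩
    exact ⟨hΦV k y hyV, hyS⟩
  -- V is not covered by the union of these meager sets
  have hunion : IsMeagre (⋃ k : Fin n, (V \ Φ k ⁻¹' S)) := by
    rw [IsMeagre, compl_iUnion]
    exact countable_iInter_mem.mpr fun k => hmeag k
  obtain ⟨y, hyV, hyS⟩ : ∃ y, y ∈ V ∧ ∀ k, Φ k y ∈ S := by
    by_contra h
    push_neg at h
    apply key V hVo hVne
    refine IsMeagre.mono ?_ hunion
    intro y hy
    obtain ⟨k, hk⟩ := h y hy
    exact mem_iUnion.mpr ⟨k, hy, hk⟩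
  -- conclude
  refine ⟨i, fun m' => y (i + 1 + m'), fun k₁ k₂ => ?_⟩
  have hfan : ∀ k : Fin n, fanPoint i (σ i) k (fun m' => y (i + 1 + m')) = Φ k y := by
    intro k
    funext m'
    simp only [fanPoint, hΦ]
    by_cases h1 : m' < i
    · rw [dif_pos h1, if_neg h1.ne, (hyV.1 ⟨m', h1⟩).symm]
    · by_cases h2 : m' = i
      · rw [dif_neg h1, if_pos h2, if_pos h2, h2, hyV.2, Equiv.swap_apply_left]
      · rw [dif_neg h1, if_neg h2, if_neg h2]
        congr 1
        omega
  have hval : ∀ k : Fin n, g (fanPoint i (σ i) k (fun m' => y (i + 1 + m'))) = a := by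
    intro k
    rw [hfan k]
    exact hyS k
  rw [hval k₁, hval k₂]
end

section
/- Let H (the inverter gadget) be the graph on 12 internal vertices with 5 pendant coding edges a,b,c,d,e as in Figure 1 [explicit edge list: vertices v₁..v₁₂ with a = {u_a, v₆}, b = {u_b, v₇}, e = {u_e, v₉}, c = {u_c, v₁₁}, d = {u_d, v₁₂}, and internal edges {v₆,v₈},{v₆,v₁₁},{v₇,v₁₀},{v₇,v₁₂},{v₈,v₉},{v₈,v₁₂},{v₉,v₁₀},{v₁₀,v₁₁}]. Then a proper edge 3-coloring f of the coding edges a,b,c,d,e extends to a proper edge 3-coloring of H if and only if either [f(a) = f(b) and f(c), f(d), f(e) are pairwise distinct] or [f(c) = f(d) and f(a), f(b), f(e) are pairwise distinct]. -/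
/-- The edges of the inverter gadget `H`.  Vertices `0,...,11` are the internal vertices
`v₁,...,v₁₂` and `12,...,16` are the pendant endpoints of the coding edges.
Edges `0,1,2,3,4` are the coding edges `a, b, c, d, e` respectively, with internal
endpoints `v₆, v₇, v₁₁, v₁₂, v₉`; edges `5,...,12` are the internal edges. -/
def inverterEdges : Fin 13 → Fin 17 × Fin 17 :=
  ![(12, 5), (13, 6), (14, 10), (15, 11), (16, 8),
    (5, 7), (5, 10), (6, 9), (6, 11), (7, 8), (7, 11), (8, 9), (9, 10)]

/-- Two edges of the gadget share an endpoint. -/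
def sharesEndpoint (e e' : Fin 13) : Prop :=
  (inverterEdges e).1 = (inverterEdges e').1 ∨ (inverterEdges e).1 = (inverterEdges e').2 ∨
  (inverterEdges e).2 = (inverterEdges e').1 ∨ (inverterEdges e).2 = (inverterEdges e').2

/-- `φ` is a proper edge 3-coloring of the inverter gadget. -/
def IsProperEdgeColoring (φ : Fin 13 → Fin 3) : Prop :=
  ∀ e e' : Fin 13, e ≠ e' → sharesEndpoint e e' → φ e ≠ φ e'


instance (e e' : Fin 13) : Decidable (sharesEndpoint e e') := by
  unfold sharesEndpoint; infer_instance

instance (φ : Fin 13 → Fin 3) : Decidable (IsProperEdgeColoring φ) := by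
  unfold IsProperEdgeColoring; infer_instance

/-- Witness table: for each tuple of coding colors satisfying the condition, a proper
extension of the coloring to all 13 edges. -/
def inverterWitness : Fin 3 → Fin 3 → Fin 3 → Fin 3 → Fin 3 → Fin 13 → Fin 3 :=
  ![![![![![![0, 0, 0, 0, 0, 0, 0, 0, 0, 0, 0, 0, 0], ![0, 0, 0, 0, 0, 0, 0, 0, 0, 0, 0, 0, 0], ![0, 0, 0, 0, 0, 0, 0, 0, 0, 0, 0, 0, 0]], ![![0, 0, 0, 0, 0, 0, 0, 0, 0, 0, 0, 0, 0], ![0, 0, 0, 0, 0, 0, 0, 0, 0, 0, 0, 0, 0], ![0, 0, 0, 1, 2, 2, 1, 1, 2, 1, 0, 0, 2]], ![![0, 0, 0, 0, 0, 0, 0, 0, 0, 0, 0, 0, 0], ![0, 0, 0, 2, 1, 1, 2, 2, 1, 2, 0, 0, 1], ![0, 0, 0, 0, 0, 0, 0, 0, 0, 0, 0, 0, 0]]], ![![![0, 0, 0, 0, 0, 0, 0, 0, 0, 0, 0, 0, 0], ![0, 0, 0, 0, 0, 0, 0, 0, 0, 0, 0, 0, 0], ![0, 0, 1, 0, 2,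 1, 2, 2, 1, 0, 2, 1, 0]], ![![0, 0, 0, 0, 0, 0, 0, 0, 0, 0, 0, 0, 0], ![0, 0, 0, 0, 0, 0, 0, 0, 0, 0, 0, 0, 0], ![0, 0, 0, 0, 0, 0, 0, 0, 0, 0, 0, 0, 0]], ![![0, 0, 1, 2, 0, 1, 2, 2, 1, 2, 0, 1, 0], ![0, 0, 0, 0, 0, 0, 0, 0, 0, 0, 0, 0, 0], ![0, 0, 0, 0, 0, 0, 0, 0, 0, 0, 0, 0, 0]]], ![![![0, 0, 0, 0, 0, 0, 0, 0, 0, 0, 0, 0, 0], ![0, 0, 2, 0, 1, 2, 1, 1, 2, 0, 1, 2, 0], ![0, 0, 0, 0, 0, 0, 0, 0, 0, 0, 0, 0, 0]], ![![0, 0, 2, 1, 0, 2, 1, 1, 2, 1, 0, 2, 0], ![0, 0, 0, 0, 0, 0, 0, 0, 0, 0, 0, 0, 0], ![0, 0, 0, 0, 0, 0, 0, 0, 0, 0, 0, 0, 0]], ![![0, 0, 0, 0, 0, 0, 0, 0, 0, 0, 0, 0, 0], ![0, 0, 0, 0, 0, 0, 0, 0, 0, 0, 0, 0, 0], ![0,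 0, 0, 0, 0, 0, 0, 0, 0, 0, 0, 0, 0]]]], ![![![![0, 0, 0, 0, 0, 0, 0, 0, 0, 0, 0, 0, 0], ![0, 0, 0, 0, 0, 0, 0, 0, 0, 0, 0, 0, 0], ![0, 1, 0, 0, 2, 2, 1, 0, 2, 0, 1, 1, 2]], ![![0, 0, 0, 0, 0, 0, 0, 0, 0, 0, 0, 0, 0], ![0, 0, 0, 0, 0, 0, 0, 0, 0, 0, 0, 0, 0], ![0, 0, 0, 0, 0, 0, 0, 0, 0, 0, 0, 0, 0]], ![![0, 0, 0, 0, 0, 0, 0, 0, 0, 0, 0, 0, 0], ![0, 0, 0, 0, 0, 0, 0, 0, 0, 0, 0, 0, 0], ![0, 0, 0, 0, 0, 0, 0, 0, 0, 0, 0, 0, 0]]], ![![![0, 0, 0, 0, 0, 0, 0, 0, 0, 0, 0, 0, 0], ![0, 0, 0, 0, 0, 0, 0, 0, 0, 0, 0, 0, 0], ![0, 0, 0, 0, 0, 0, 0, 0, 0, 0, 0, 0, 0]], ![![0, 0, 0, 0, 0, 0, 0, 0, 0, 0, 0, 0, 0], ![0, 0, 0, 0, 0, 0, 0, 0, 0,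 0, 0, 0, 0], ![0, 1, 1, 1, 2, 1, 2, 2, 0, 0, 2, 1, 0]], ![![0, 0, 0, 0, 0, 0, 0, 0, 0, 0, 0, 0, 0], ![0, 0, 0, 0, 0, 0, 0, 0, 0, 0, 0, 0, 0], ![0, 0, 0, 0, 0, 0, 0, 0, 0, 0, 0, 0, 0]]], ![![![0, 0, 0, 0, 0, 0, 0, 0, 0, 0, 0, 0, 0], ![0, 0, 0, 0, 0, 0, 0, 0, 0, 0, 0, 0, 0], ![0, 0, 0, 0, 0, 0, 0, 0, 0, 0, 0, 0, 0]], ![![0, 0, 0, 0, 0, 0, 0, 0, 0, 0, 0, 0, 0], ![0, 0, 0, 0, 0, 0, 0, 0, 0, 0, 0, 0, 0], ![0, 0, 0, 0, 0, 0, 0, 0, 0, 0, 0, 0, 0]], ![![0, 0, 0, 0, 0, 0, 0, 0, 0, 0, 0, 0, 0], ![0, 0, 0, 0, 0, 0, 0, 0, 0, 0, 0, 0, 0], ![0, 1, 2, 2, 2, 2, 1, 2, 0, 0, 1, 1, 0]]]], ![![![![0, 0, 0, 0, 0, 0, 0, 0, 0, 0, 0, 0, 0], ![0, 2, 0, 0,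 1, 1, 2, 0, 1, 0, 2, 2, 1], ![0, 0, 0, 0, 0, 0, 0, 0, 0, 0, 0, 0, 0]], ![![0, 0, 0, 0, 0, 0, 0, 0, 0, 0, 0, 0, 0], ![0, 0, 0, 0, 0, 0, 0, 0, 0, 0, 0, 0, 0], ![0, 0, 0, 0, 0, 0, 0, 0, 0, 0, 0, 0, 0]], ![![0, 0, 0, 0, 0, 0, 0, 0, 0, 0, 0, 0, 0], ![0, 0, 0, 0, 0, 0, 0, 0, 0, 0, 0, 0, 0], ![0, 0, 0, 0, 0, 0, 0, 0, 0, 0, 0, 0, 0]]], ![![![0, 0, 0, 0, 0, 0, 0, 0, 0, 0, 0, 0, 0], ![0, 0, 0, 0, 0, 0, 0, 0, 0, 0, 0, 0, 0], ![0, 0, 0, 0, 0, 0, 0, 0, 0, 0, 0, 0, 0]], ![![0, 0, 0, 0, 0, 0, 0, 0, 0, 0, 0, 0, 0], ![0, 2, 1, 1, 1, 1, 2, 1, 0, 0, 2, 2, 0], ![0, 0, 0, 0, 0, 0, 0, 0, 0, 0, 0, 0, 0]], ![![0, 0, 0, 0, 0, 0, 0, 0, 0, 0, 0, 0, 0], ![0,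 0, 0, 0, 0, 0, 0, 0, 0, 0, 0, 0, 0], ![0, 0, 0, 0, 0, 0, 0, 0, 0, 0, 0, 0, 0]]], ![![![0, 0, 0, 0, 0, 0, 0, 0, 0, 0, 0, 0, 0], ![0, 0, 0, 0, 0, 0, 0, 0, 0, 0, 0, 0, 0], ![0, 0, 0, 0, 0, 0, 0, 0, 0, 0, 0, 0, 0]], ![![0, 0, 0, 0, 0, 0, 0, 0, 0, 0, 0, 0, 0], ![0, 0, 0, 0, 0, 0, 0, 0, 0, 0, 0, 0, 0], ![0, 0, 0, 0, 0, 0, 0, 0, 0, 0, 0, 0, 0]], ![![0, 0, 0, 0, 0, 0, 0, 0, 0, 0, 0, 0, 0], ![0, 2, 2, 2, 1, 2, 1, 1, 0, 0, 1, 2, 0], ![0, 0, 0, 0, 0, 0, 0, 0, 0, 0, 0, 0, 0]]]]], ![![![![![0, 0, 0, 0, 0, 0, 0, 0, 0, 0, 0, 0, 0], ![0, 0, 0, 0, 0, 0, 0, 0, 0, 0, 0, 0, 0], ![1, 0, 0, 0, 2, 0, 2, 2, 1, 1, 2, 0, 1]], ![![0, 0, 0, 0, 0, 0, 0, 0, 0,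 0, 0, 0, 0], ![0, 0, 0, 0, 0, 0, 0, 0, 0, 0, 0, 0, 0], ![0, 0, 0, 0, 0, 0, 0, 0, 0, 0, 0, 0, 0]], ![![0, 0, 0, 0, 0, 0, 0, 0, 0, 0, 0, 0, 0], ![0, 0, 0, 0, 0, 0, 0, 0, 0, 0, 0, 0, 0], ![0, 0, 0, 0, 0, 0, 0, 0, 0, 0, 0, 0, 0]]], ![![![0, 0, 0, 0, 0, 0, 0, 0, 0, 0, 0, 0, 0], ![0, 0, 0, 0, 0, 0, 0, 0, 0, 0, 0, 0, 0], ![0, 0, 0, 0, 0, 0, 0, 0, 0, 0, 0, 0, 0]], ![![0, 0, 0, 0, 0, 0, 0, 0, 0, 0, 0, 0, 0], ![0, 0, 0, 0, 0, 0, 0, 0, 0, 0, 0, 0, 0], ![1, 0, 1, 1, 2, 2, 0, 1, 2, 1, 0, 0, 2]], ![![0, 0, 0, 0, 0, 0, 0, 0, 0, 0, 0, 0, 0], ![0, 0, 0, 0, 0, 0, 0, 0, 0, 0, 0, 0, 0], ![0, 0, 0, 0, 0, 0, 0, 0, 0, 0, 0, 0, 0]]], ![![![0, 0, 0, 0, 0,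 0, 0, 0, 0, 0, 0, 0, 0], ![0, 0, 0, 0, 0, 0, 0, 0, 0, 0, 0, 0, 0], ![0, 0, 0, 0, 0, 0, 0, 0, 0, 0, 0, 0, 0]], ![![0, 0, 0, 0, 0, 0, 0, 0, 0, 0, 0, 0, 0], ![0, 0, 0, 0, 0, 0, 0, 0, 0, 0, 0, 0, 0], ![0, 0, 0, 0, 0, 0, 0, 0, 0, 0, 0, 0, 0]], ![![0, 0, 0, 0, 0, 0, 0, 0, 0, 0, 0, 0, 0], ![0, 0, 0, 0, 0, 0, 0, 0, 0, 0, 0, 0, 0], ![1, 0, 2, 2, 2, 2, 0, 2, 1, 1, 0, 0, 1]]]], ![![![![0, 0, 0, 0, 0, 0, 0, 0, 0, 0, 0, 0, 0], ![0, 0, 0, 0, 0, 0, 0, 0, 0, 0, 0, 0, 0], ![0, 0, 0, 0, 0, 0, 0, 0, 0, 0, 0, 0, 0]], ![![0, 0, 0, 0, 0, 0, 0, 0, 0, 0, 0, 0, 0], ![0, 0, 0, 0, 0, 0, 0, 0, 0, 0, 0, 0, 0], ![1, 1, 0, 1, 2, 0, 2, 2, 0, 1, 2, 0, 1]], ![![0,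 0, 0, 0, 0, 0, 0, 0, 0, 0, 0, 0, 0], ![1, 1, 0, 2, 1, 0, 2, 2, 0, 2, 1, 0, 1], ![0, 0, 0, 0, 0, 0, 0, 0, 0, 0, 0, 0, 0]]], ![![![0, 0, 0, 0, 0, 0, 0, 0, 0, 0, 0, 0, 0], ![0, 0, 0, 0, 0, 0, 0, 0, 0, 0, 0, 0, 0], ![1, 1, 1, 0, 2, 2, 0, 0, 2, 0, 1, 1, 2]], ![![0, 0, 0, 0, 0, 0, 0, 0, 0, 0, 0, 0, 0], ![0, 0, 0, 0, 0, 0, 0, 0, 0, 0, 0, 0, 0], ![0, 0, 0, 0, 0, 0, 0, 0, 0, 0, 0, 0, 0]], ![![1, 1, 1, 2, 0, 0, 2, 2, 0, 2, 1, 1, 0], ![0, 0, 0, 0, 0, 0, 0, 0, 0, 0, 0, 0, 0], ![0, 0, 0, 0, 0, 0, 0, 0, 0, 0, 0, 0, 0]]], ![![![0, 0, 0, 0, 0, 0, 0, 0, 0, 0, 0, 0, 0], ![1, 1, 2, 0, 1, 2, 0, 0, 2, 0, 1, 2, 1], ![0, 0, 0, 0, 0, 0, 0, 0, 0, 0, 0,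 0, 0]], ![![1, 1, 2, 1, 0, 2, 0, 0, 2, 1, 0, 2, 1], ![0, 0, 0, 0, 0, 0, 0, 0, 0, 0, 0, 0, 0], ![0, 0, 0, 0, 0, 0, 0, 0, 0, 0, 0, 0, 0]], ![![0, 0, 0, 0, 0, 0, 0, 0, 0, 0, 0, 0, 0], ![0, 0, 0, 0, 0, 0, 0, 0, 0, 0, 0, 0, 0], ![0, 0, 0, 0, 0, 0, 0, 0, 0, 0, 0, 0, 0]]]], ![![![![1, 2, 0, 0, 0, 0, 2, 0, 1, 1, 2, 2, 1], ![0, 0, 0, 0, 0, 0, 0, 0, 0, 0, 0, 0, 0], ![0, 0, 0, 0, 0, 0, 0, 0, 0, 0, 0, 0, 0]], ![![0, 0, 0, 0, 0, 0, 0, 0, 0, 0, 0, 0, 0], ![0, 0, 0, 0, 0, 0, 0, 0, 0, 0, 0, 0, 0], ![0, 0, 0, 0, 0, 0, 0, 0, 0, 0, 0, 0, 0]], ![![0, 0, 0, 0, 0, 0, 0, 0, 0, 0, 0, 0, 0], ![0, 0, 0, 0, 0, 0, 0, 0, 0, 0, 0, 0, 0], ![0, 0, 0, 0, 0, 0, 0,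 0, 0, 0, 0, 0, 0]]], ![![![0, 0, 0, 0, 0, 0, 0, 0, 0, 0, 0, 0, 0], ![0, 0, 0, 0, 0, 0, 0, 0, 0, 0, 0, 0, 0], ![0, 0, 0, 0, 0, 0, 0, 0, 0, 0, 0, 0, 0]], ![![1, 2, 1, 1, 0, 0, 2, 1, 0, 1, 2, 2, 0], ![0, 0, 0, 0, 0, 0, 0, 0, 0, 0, 0, 0, 0], ![0, 0, 0, 0, 0, 0, 0, 0, 0, 0, 0, 0, 0]], ![![0, 0, 0, 0, 0, 0, 0, 0, 0, 0, 0, 0, 0], ![0, 0, 0, 0, 0, 0, 0, 0, 0, 0, 0, 0, 0], ![0, 0, 0, 0, 0, 0, 0, 0, 0, 0, 0, 0, 0]]], ![![![0, 0, 0, 0, 0, 0, 0, 0, 0, 0, 0, 0, 0], ![0, 0, 0, 0, 0, 0, 0, 0, 0, 0, 0, 0, 0], ![0, 0, 0, 0, 0, 0, 0, 0, 0, 0, 0, 0, 0]], ![![0, 0, 0, 0, 0, 0, 0, 0, 0, 0, 0, 0, 0], ![0, 0, 0, 0, 0, 0, 0, 0, 0, 0, 0, 0, 0], ![0, 0, 0,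 0, 0, 0, 0, 0, 0, 0, 0, 0, 0]], ![![1, 2, 2, 2, 0, 2, 0, 0, 1, 1, 0, 2, 1], ![0, 0, 0, 0, 0, 0, 0, 0, 0, 0, 0, 0, 0], ![0, 0, 0, 0, 0, 0, 0, 0, 0, 0, 0, 0, 0]]]]], ![![![![![0, 0, 0, 0, 0, 0, 0, 0, 0, 0, 0, 0, 0], ![2, 0, 0, 0, 1, 0, 1, 1, 2, 2, 1, 0, 2], ![0, 0, 0, 0, 0, 0, 0, 0, 0, 0, 0, 0, 0]], ![![0, 0, 0, 0, 0, 0, 0, 0, 0, 0, 0, 0, 0], ![0, 0, 0, 0, 0, 0, 0, 0, 0, 0, 0, 0, 0], ![0, 0, 0, 0, 0, 0, 0, 0, 0, 0, 0, 0, 0]], ![![0, 0, 0, 0, 0, 0, 0, 0, 0, 0, 0, 0, 0], ![0, 0, 0, 0, 0, 0, 0, 0, 0, 0, 0, 0, 0], ![0, 0, 0, 0, 0, 0, 0, 0, 0, 0, 0, 0, 0]]], ![![![0, 0, 0, 0, 0, 0, 0, 0, 0, 0, 0, 0, 0], ![0, 0, 0, 0, 0, 0, 0, 0, 0, 0, 0,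 0, 0], ![0, 0, 0, 0, 0, 0, 0, 0, 0, 0, 0, 0, 0]], ![![0, 0, 0, 0, 0, 0, 0, 0, 0, 0, 0, 0, 0], ![2, 0, 1, 1, 1, 1, 0, 1, 2, 2, 0, 0, 2], ![0, 0, 0, 0, 0, 0, 0, 0, 0, 0, 0, 0, 0]], ![![0, 0, 0, 0, 0, 0, 0, 0, 0, 0, 0, 0, 0], ![0, 0, 0, 0, 0, 0, 0, 0, 0, 0, 0, 0, 0], ![0, 0, 0, 0, 0, 0, 0, 0, 0, 0, 0, 0, 0]]], ![![![0, 0, 0, 0, 0, 0, 0, 0, 0, 0, 0, 0, 0], ![0, 0, 0, 0, 0, 0, 0, 0, 0, 0, 0, 0, 0], ![0, 0, 0, 0, 0, 0, 0, 0, 0, 0, 0, 0, 0]], ![![0, 0, 0, 0, 0, 0, 0, 0, 0, 0, 0, 0, 0], ![0, 0, 0, 0, 0, 0, 0, 0, 0, 0, 0, 0, 0], ![0, 0, 0, 0, 0, 0, 0, 0, 0, 0, 0, 0, 0]], ![![0, 0, 0, 0, 0, 0, 0, 0, 0, 0, 0, 0, 0], ![2, 0, 2, 2, 1, 1, 0,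 2, 1, 2, 0, 0, 1], ![0, 0, 0, 0, 0, 0, 0, 0, 0, 0, 0, 0, 0]]]], ![![![![2, 1, 0, 0, 0, 0, 1, 0, 2, 2, 1, 1, 2], ![0, 0, 0, 0, 0, 0, 0, 0, 0, 0, 0, 0, 0], ![0, 0, 0, 0, 0, 0, 0, 0, 0, 0, 0, 0, 0]], ![![0, 0, 0, 0, 0, 0, 0, 0, 0, 0, 0, 0, 0], ![0, 0, 0, 0, 0, 0, 0, 0, 0, 0, 0, 0, 0], ![0, 0, 0, 0, 0, 0, 0, 0, 0, 0, 0, 0, 0]], ![![0, 0, 0, 0, 0, 0, 0, 0, 0, 0, 0, 0, 0], ![0, 0, 0, 0, 0, 0, 0, 0, 0, 0, 0, 0, 0], ![0, 0, 0, 0, 0, 0, 0, 0, 0, 0, 0, 0, 0]]], ![![![0, 0, 0, 0, 0, 0, 0, 0, 0, 0, 0, 0, 0], ![0, 0, 0, 0, 0, 0, 0, 0, 0, 0, 0, 0, 0], ![0, 0, 0, 0, 0, 0, 0, 0, 0, 0, 0, 0, 0]], ![![2, 1, 1, 1, 0, 1, 0, 0, 2, 2, 0, 1, 2], ![0, 0,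 0, 0, 0, 0, 0, 0, 0, 0, 0, 0, 0], ![0, 0, 0, 0, 0, 0, 0, 0, 0, 0, 0, 0, 0]], ![![0, 0, 0, 0, 0, 0, 0, 0, 0, 0, 0, 0, 0], ![0, 0, 0, 0, 0, 0, 0, 0, 0, 0, 0, 0, 0], ![0, 0, 0, 0, 0, 0, 0, 0, 0, 0, 0, 0, 0]]], ![![![0, 0, 0, 0, 0, 0, 0, 0, 0, 0, 0, 0, 0], ![0, 0, 0, 0, 0, 0, 0, 0, 0, 0, 0, 0, 0], ![0, 0, 0, 0, 0, 0, 0, 0, 0, 0, 0, 0, 0]], ![![0, 0, 0, 0, 0, 0, 0, 0, 0, 0, 0, 0, 0], ![0, 0, 0, 0, 0, 0, 0, 0, 0, 0, 0, 0, 0], ![0, 0, 0, 0, 0, 0, 0, 0, 0, 0, 0, 0, 0]], ![![2, 1, 2, 2, 0, 0, 1, 2, 0, 2, 1, 1, 0], ![0, 0, 0, 0, 0, 0, 0, 0, 0, 0, 0, 0, 0], ![0, 0, 0, 0, 0, 0, 0, 0, 0, 0, 0, 0, 0]]]], ![![![![0, 0, 0, 0, 0, 0, 0, 0, 0, 0,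 0, 0, 0], ![0, 0, 0, 0, 0, 0, 0, 0, 0, 0, 0, 0, 0], ![0, 0, 0, 0, 0, 0, 0, 0, 0, 0, 0, 0, 0]], ![![0, 0, 0, 0, 0, 0, 0, 0, 0, 0, 0, 0, 0], ![0, 0, 0, 0, 0, 0, 0, 0, 0, 0, 0, 0, 0], ![2, 2, 0, 1, 2, 0, 1, 1, 0, 1, 2, 0, 2]], ![![0, 0, 0, 0, 0, 0, 0, 0, 0, 0, 0, 0, 0], ![2, 2, 0, 2, 1, 0, 1, 1, 0, 2, 1, 0, 2], ![0, 0, 0, 0, 0, 0, 0, 0, 0, 0, 0, 0, 0]]], ![![![0, 0, 0, 0, 0, 0, 0, 0, 0, 0, 0, 0, 0], ![0, 0, 0, 0, 0, 0, 0, 0, 0, 0, 0, 0, 0], ![2, 2, 1, 0, 2, 1, 0, 0, 1, 0, 2, 1, 2]], ![![0, 0, 0, 0, 0, 0, 0, 0, 0, 0, 0, 0, 0], ![0, 0, 0, 0, 0, 0, 0, 0, 0, 0, 0, 0, 0], ![0, 0, 0, 0, 0, 0, 0, 0, 0, 0, 0, 0, 0]], ![![2, 2, 1, 2, 0, 1,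 0, 0, 1, 2, 0, 1, 2], ![0, 0, 0, 0, 0, 0, 0, 0, 0, 0, 0, 0, 0], ![0, 0, 0, 0, 0, 0, 0, 0, 0, 0, 0, 0, 0]]], ![![![0, 0, 0, 0, 0, 0, 0, 0, 0, 0, 0, 0, 0], ![2, 2, 2, 0, 1, 1, 0, 0, 1, 0, 2, 2, 1], ![0, 0, 0, 0, 0, 0, 0, 0, 0, 0, 0, 0, 0]], ![![2, 2, 2, 1, 0, 0, 1, 1, 0, 1, 2, 2, 0], ![0, 0, 0, 0, 0, 0, 0, 0, 0, 0, 0, 0, 0], ![0, 0, 0, 0, 0, 0, 0, 0, 0, 0, 0, 0, 0]], ![![0, 0, 0, 0, 0, 0, 0, 0, 0, 0, 0, 0, 0], ![0, 0, 0, 0, 0, 0, 0, 0, 0, 0, 0, 0, 0], ![0, 0, 0, 0, 0, 0, 0, 0, 0, 0, 0, 0, 0]]]]]]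

lemma inverterWitness_spec : ∀ a b c d e : Fin 3,
    ((a = b ∧ c ≠ d ∧ d ≠ e ∧ c ≠ e) ∨ (c = d ∧ a ≠ b ∧ b ≠ e ∧ a ≠ e)) →
    IsProperEdgeColoring (inverterWitness a b c d e) ∧
      (inverterWitness a b c d e 0 = a ∧ inverterWitness a b c d e 1 = b ∧
       inverterWitness a b c d e 2 = c ∧ inverterWitness a b c d e 3 = d ∧
       inverterWitness a b c d e 4 = e) := by decide

/-- Arithmetic core of the forward direction. -/
lemma inverter_arith (a b c d e x5 x6 x7 x8 x9 x10 x11 x12 : ℕ)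
    (ba : a < 3) (bb : b < 3) (bc : c < 3) (bd : d < 3) (be : e < 3)
    (b5 : x5 < 3) (b6 : x6 < 3) (b7 : x7 < 3) (b8 : x8 < 3)
    (b9 : x9 < 3) (b10 : x10 < 3) (b11 : x11 < 3) (b12 : x12 < 3)
    (s0 : a + x5 + x6 = 3) (s1 : b + x7 + x8 = 3) (s2 : x5 + x9 + x10 = 3)
    (s3 : e + x9 + x11 = 3) (s4 : x7 + x11 + x12 = 3) (s5 : c + x6 + x12 = 3)
    (s6 : d + x8 + x10 = 3)
    (n0 : x5 ≠ x6) (n1 : x7 ≠ x8) (n2 : x9 ≠ x10) (n3 : x9 ≠ x11)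
    (n4 : x11 ≠ x12) (n5 : x6 ≠ x12) (n6 : x8 ≠ x10) :
    (a = b ∧ ¬c = d ∧ ¬d = e ∧ ¬c = e) ∨ (c = d ∧ ¬a = b ∧ ¬b = e ∧ ¬a = e) := by
  interval_cases x5 <;> interval_cases x7 <;> interval_cases x9 <;> omega

/-- Inverter lemma: a 3-coloring `f` of the coding edges `a, b, c, d, e` extends to a proper
edge 3-coloring of the gadget `H` iff either `f(a) = f(b)` and `f(c), f(d), f(e)` are
pairwise distinct, or `f(c) = f(d)` and `f(a), f(b), f(e)` are pairwise distinct. -/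
theorem inverter_lemma (f : Fin 5 → Fin 3) :
    (∃ φ : Fin 13 → Fin 3, IsProperEdgeColoring φ ∧
        ∀ i : Fin 5, φ (Fin.castLE (by norm_num) i) = f i) ↔
      ((f 0 = f 1 ∧ f 2 ≠ f 3 ∧ f 3 ≠ f 4 ∧ f 2 ≠ f 4) ∨
        (f 2 = f 3 ∧ f 0 ≠ f 1 ∧ f 1 ≠ f 4 ∧ f 0 ≠ f 4)) := by
  constructor
  · rintro ⟨φ, hp, he⟩
    have tri : ∀ x y z : Fin 3, x ≠ y → x ≠ z → y ≠ z → x.val + y.val + z.val = 3 := by decide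
    have e0 : φ 0 = f 0 := he 0
    have e1 : φ 1 = f 1 := he 1
    have e2 : φ 2 = f 2 := he 2
    have e3 : φ 3 = f 3 := he 3
    have e4 : φ 4 = f 4 := he 4
    have h0_5 : φ 0 ≠ φ 5 := hp 0 5 (by decide) (by decide)
    have h0_6 : φ 0 ≠ φ 6 := hp 0 6 (by decide) (by decide)
    have h5_6 : φ 5 ≠ φ 6 := hp 5 6 (by decide) (by decide)
    have s0 : (f 0).val + (φ 5).val + (φ 6).val = 3 := by
      have := tri (φ 0) (φ 5) (φ 6) h0_5 h0_6 h5_6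
      rw [e0] at this
      exact this
    have h1_7 : φ 1 ≠ φ 7 := hp 1 7 (by decide) (by decide)
    have h1_8 : φ 1 ≠ φ 8 := hp 1 8 (by decide) (by decide)
    have h7_8 : φ 7 ≠ φ 8 := hp 7 8 (by decide) (by decide)
    have s1 : (f 1).val + (φ 7).val + (φ 8).val = 3 := by
      have := tri (φ 1) (φ 7) (φ 8) h1_7 h1_8 h7_8
      rw [e1] at this
      exact this
    have h5_9 : φ 5 ≠ φ 9 := hp 5 9 (by decide) (by decide)
    have h5_10 : φ 5 ≠ φ 10 := hp 5 10 (by decide) (by decide)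
    have h9_10 : φ 9 ≠ φ 10 := hp 9 10 (by decide) (by decide)
    have s2 : (φ 5).val + (φ 9).val + (φ 10).val = 3 := by
      have := tri (φ 5) (φ 9) (φ 10) h5_9 h5_10 h9_10
      exact this
    have h4_9 : φ 4 ≠ φ 9 := hp 4 9 (by decide) (by decide)
    have h4_11 : φ 4 ≠ φ 11 := hp 4 11 (by decide) (by decide)
    have h9_11 : φ 9 ≠ φ 11 := hp 9 11 (by decide) (by decide)
    have s3 : (f 4).val + (φ 9).val + (φ 11).val = 3 := by
      have := tri (φ 4) (φ 9) (φ 11) h4_9 h4_11 h9_11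
      rw [e4] at this
      exact this
    have h7_11 : φ 7 ≠ φ 11 := hp 7 11 (by decide) (by decide)
    have h7_12 : φ 7 ≠ φ 12 := hp 7 12 (by decide) (by decide)
    have h11_12 : φ 11 ≠ φ 12 := hp 11 12 (by decide) (by decide)
    have s4 : (φ 7).val + (φ 11).val + (φ 12).val = 3 := by
      have := tri (φ 7) (φ 11) (φ 12) h7_11 h7_12 h11_12
      exact this
    have h2_6 : φ 2 ≠ φ 6 := hp 2 6 (by decide) (by decide)
    have h2_12 : φ 2 ≠ φ 12 := hp 2 12 (by decide) (by decide)
    have h6_12 : φ 6 ≠ φ 12 := hp 6 12 (by decide) (by decide)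
    have s5 : (f 2).val + (φ 6).val + (φ 12).val = 3 := by
      have := tri (φ 2) (φ 6) (φ 12) h2_6 h2_12 h6_12
      rw [e2] at this
      exact this
    have h3_8 : φ 3 ≠ φ 8 := hp 3 8 (by decide) (by decide)
    have h3_10 : φ 3 ≠ φ 10 := hp 3 10 (by decide) (by decide)
    have h8_10 : φ 8 ≠ φ 10 := hp 8 10 (by decide) (by decide)
    have s6 : (f 3).val + (φ 8).val + (φ 10).val = 3 := by
      have := tri (φ 3) (φ 8) (φ 10) h3_8 h3_10 h8_10
      rw [e3] at this
      exact this
    have n0 : (φ 5).val ≠ (φ 6).val := by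
      exact fun h => h5_6 (Fin.val_injective h)
    have n1 : (φ 7).val ≠ (φ 8).val := by
      exact fun h => h7_8 (Fin.val_injective h)
    have n2 : (φ 9).val ≠ (φ 10).val := by
      exact fun h => h9_10 (Fin.val_injective h)
    have n3 : (φ 9).val ≠ (φ 11).val := by
      exact fun h => h9_11 (Fin.val_injective h)
    have n4 : (φ 11).val ≠ (φ 12).val := by
      exact fun h => h11_12 (Fin.val_injective h)
    have n5 : (φ 6).val ≠ (φ 12).val := by
      exact fun h => h6_12 (Fin.val_injective h)
    have n6 : (φ 8).val ≠ (φ 10).val := by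
      exact fun h => h8_10 (Fin.val_injective h)
    simp only [ne_eq, Fin.ext_iff]
    exact inverter_arith (f 0).val (f 1).val (f 2).val (f 3).val (f 4).val
      (φ 5).val (φ 6).val (φ 7).val (φ 8).val (φ 9).val (φ 10).val (φ 11).val (φ 12).val
      (f 0).isLt (f 1).isLt (f 2).isLt (f 3).isLt (f 4).isLt
      (φ 5).isLt (φ 6).isLt (φ 7).isLt (φ 8).isLt (φ 9).isLt (φ 10).isLt (φ 11).isLt (φ 12).isLt
      s0 s1 s2 s3 s4 s5 s6 n0 n1 n2 n3 n4 n5 n6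
  · intro h
    obtain ⟨hprop, h0, h1, h2, h3, h4⟩ :=
      inverterWitness_spec (f 0) (f 1) (f 2) (f 3) (f 4) h
    refine ⟨inverterWitness (f 0) (f 1) (f 2) (f 3) (f 4), hprop, ?_⟩
    intro i; fin_cases i <;> assumption
end

section
/- Let A be a finite idempotent algebra, B ≤ Aⁿ a subalgebra, and f : B → X a surjective homomorphism onto a nontrivial algebra X. Choose I ⊆ {1,...,n} maximal such that for some tuple ā ∈ A^I, f is not constant on B' := {b ∈ B : π_I(b) = ā}. Then B' is a subalgebra of B, and f restricted to B' factors through the projection π_j for any single coordinate j ∉ I (when I ≠ {1,...,n}); consequently a nontrivial homomorphic image of X is a homomorphic image of the subalgebra π_j(B') ≤ A. -/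
/-- Bulatov–Jeavons HS lemma.  `A` is a finite idempotent algebra (operations `opA`),
`B ≤ Aⁿ` a subalgebra, `f : B → X` a surjective homomorphism onto a nontrivial algebra
`X` (operations `opX`).  If `I` is maximal such that `f` is not constant on the fiber
`B' = {b ∈ B : π_I b = ā}`, then `B'` is a subalgebra and, for every coordinate `j ∉ I`,
`f` restricted to `B'` factors through `π_j`; consequently a nontrivial homomorphic image
of `X` is a homomorphic image of the subalgebra `π_j(B') ≤ A`. -/
theorem bulatov_jeavons_HS_lemma {A X : Type*} [Fintype A]
    {ι : Type*} {ar : ι → ℕ}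
    (opA : ∀ i, (Fin (ar i) → A) → A) (opX : ∀ i, (Fin (ar i) → X) → X)
    (hidem : ∀ i (a : A), opA i (fun _ => a) = a)
    {n : ℕ} (B : Set (Fin n → A))
    (hB : ∀ i (t : Fin (ar i) → (Fin n → A)), (∀ m, t m ∈ B) →
      (fun q => opA i (fun m => t m q)) ∈ B)
    (f : (Fin n → A) → X)
    (hf : ∀ i (t : Fin (ar i) → (Fin n → A)), (∀ m, t m ∈ B) →
      f (fun q => opA i (fun m => t m q)) = opX i (fun m => f (t m)))
    (hsurj : ∀ x : X, ∃ b ∈ B, f b = x)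
    (hX : ∃ x y : X, x ≠ y)
    (I : Set (Fin n)) (abar : Fin n → A)
    (B' : Set (Fin n → A)) (hB' : B' = {b ∈ B | ∀ i ∈ I, b i = abar i})
    (hnc : ¬ ∀ b ∈ B', ∀ b' ∈ B', f b = f b')
    (hmax : ∀ J : Set (Fin n), I ⊆ J → I ≠ J → ∀ c : Fin n → A,
      ∀ b ∈ B, ∀ b' ∈ B, (∀ i ∈ J, b i = c i) → (∀ i ∈ J, b' i = c i) → f b = f b') :
    (∀ i (t : Fin (ar i) → (Fin n → A)), (∀ m, t m ∈ B') →
      (fun q => opA i (fun m => t m q)) ∈ B') ∧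
    ∀ j ∉ I,
      (∀ b ∈ B', ∀ b' ∈ B', b j = b' j → f b = f b') ∧
      ∃ g : A → X,
        (∀ b ∈ B', g (b j) = f b) ∧
        (∀ i (t : Fin (ar i) → A), (∀ m, t m ∈ (fun b => b j) '' B') →
          g (opA i t) = opX i (fun m => g (t m))) ∧
        ¬ (g '' ((fun b => b j) '' B')).Subsingleton := by
  classical
  obtain ⟨x0, y0, hxy⟩ := hX
  have hclos : ∀ i (t : Fin (ar i) → (Fin n → A)), (∀ m, t m ∈ B') →
      (fun q => opA i (fun m => t m q)) ∈ B' := by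
    intro i t ht
    rw [hB'] at ht ⊢
    refine ⟨hB i t (fun m => (ht m).1), ?_⟩
    intro k hk
    have h1 : (fun m => t m k) = fun _ => abar k := funext fun m => (ht m).2 k hk
    simp only [h1, hidem]
  refine ⟨hclos, ?_⟩
  intro j hj
  have hfac : ∀ b ∈ B', ∀ b' ∈ B', b j = b' j → f b = f b' := by
    intro b hb b' hb' hbj
    rw [hB'] at hb hb'
    refine hmax (I ∪ {j}) Set.subset_union_left ?_
      (Function.update abar j (b j)) b hb.1 b' hb'.1 ?_ ?_
    · intro h; exact hj (h ▸ Set.mem_union_right I rfl)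
    · intro k hk
      rcases hk with hk | hk
      · rw [Function.update_of_ne (fun h : k = j => hj (h ▸ hk)), hb.2 k hk]
      · rcases hk with rfl; simp
    · intro k hk
      rcases hk with hk | hk
      · rw [Function.update_of_ne (fun h : k = j => hj (h ▸ hk)), hb'.2 k hk]
      · rcases hk with rfl; simp [hbj]
  refine ⟨hfac, ?_⟩
  set g : A → X := fun a => if h : ∃ b, b ∈ B' ∧ b j = a then f h.choose else x0 with hg
  have hgval : ∀ b ∈ B', g (b j) = f b := by
    intro b hb
    have h : ∃ b', b' ∈ B' ∧ b' j = b j := ⟨b, hb, rfl⟩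
    simp only [hg, dif_pos h]
    exact hfac _ h.choose_spec.1 b hb h.choose_spec.2
  refine ⟨g, hgval, ?_, ?_⟩
  · intro i t ht
    choose bm hbm hbmj using fun m => (ht m)
    have hin : (fun q => opA i (fun m => bm m q)) ∈ B' := hclos i bm hbm
    have hbmB : ∀ m, bm m ∈ B := by
      intro m; have := hbm m; rw [hB'] at this; exact this.1
    have h1 : opA i t = (fun q => opA i (fun m => bm m q)) j := by
      simp only []
      congr 1
      exact funext fun m => (hbmj m).symm
    rw [h1, hgval _ hin, hf i bm hbmB]
    congr 1
    funext m
    rw [← hbmj m]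
    exact (hgval _ (hbm m)).symm
  · intro hsub
    apply hnc
    intro b hb b' hb'
    have := hsub ⟨b j, ⟨b, hb, rfl⟩, hgval b hb⟩ ⟨b' j, ⟨b', hb', rfl⟩, hgval b' hb'⟩
    exact this
end

section
/- Suppose partial functions f₀, f₁, f₂, ... from a set X to a finite set D each satisfy: (i) functionality; (ii) for every constraint of the form R_{a,b}(x,y) ('x = a or y = b') in a fixed instance X, if x ∈ dom(fᵢ) and fᵢ(x) ≠ a then y ∈ dom(fᵢ) and fᵢ(y) = b, and symmetrically; (iii) for every constraint R_g(x,y) ('y = g(x)' for a permutation g of D), if x ∈ dom(fᵢ) then y ∈ dom(fᵢ) and fᵢ(y) = g(fᵢ(x)), and symmetrically; (iv) for every unary constraint U(x), if x ∈ dom(fᵢ) then fᵢ(x) ∈ U. If X = ⋃ᵢ dom(fᵢ), then the function f defined by f(x) = f_{n(x)}(x) where n(x) = min{i : x ∈ dom(fᵢ)} is a total solution: it satisfies all unary constraints, all constraints R_{a,b}, and all constraints R_g of the instance. -/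
/-- Patching lemma for dual-discriminator style instances.  The instance has variables `X`
over a finite domain `D`, unary constraints `Uc`, constraints `R_{a,b}` (`x = a ∨ y = b`)
given by `Rab`, and constraints `R_g` (`y = g x`, `g` a permutation) given by `Rg`.
If the partial functions `fᵢ` each satisfy the closure properties (ii)–(iv) and their
domains cover `X`, then the function `F` with `F x = f_{n(x)} x` (where `n(x)` is the least
index with `x ∈ dom fᵢ`) is a total solution. -/
theorem patching_partial_solutions {X D : Type*} [Finite D]
    (Uc : Set (X × Set D))
    (Rab : Set (X × X × D × D))
    (Rg : Set (X × X × Equiv.Perm D))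
    (f : ℕ → X → Option D)
    (hii : ∀ i x y a b, (x, y, a, b) ∈ Rab →
      (∀ d, f i x = some d → d ≠ a → f i y = some b) ∧
      (∀ d, f i y = some d → d ≠ b → f i x = some a))
    (hiii : ∀ i x y g, (x, y, g) ∈ Rg →
      (∀ d, f i x = some d → f i y = some (g d)) ∧
      (∀ d, f i y = some d → f i x = some (g.symm d)))
    (hiv : ∀ i x U, (x, U) ∈ Uc → ∀ d, f i x = some d → d ∈ U)
    (hcover : ∀ x, ∃ i, (f i x).isSome)
    (F : X → D)
    (hF : ∀ x, ∃ i, f i x = some (F x) ∧ ∀ j < i, f j x = none) :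
    (∀ x U, (x, U) ∈ Uc → F x ∈ U) ∧
    (∀ x y a b, (x, y, a, b) ∈ Rab → F x = a ∨ F y = b) ∧
    (∀ x y g, (x, y, g) ∈ Rg → F y = g (F x)) := by
  refine ⟨?_, ?_, ?_⟩
  · intro x U hU
    obtain ⟨i, hix, -⟩ := hF x
    exact hiv i x U hU _ hix
  · intro x y a b hR
    by_contra h
    push_neg at h
    obtain ⟨ha, hb⟩ := h
    obtain ⟨i, hix, hixmin⟩ := hF x
    obtain ⟨j, hjy, hjymin⟩ := hF y
    rcases le_or_gt i j with hij | hij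
    · have hy : f i y = some b := (hii i x y a b hR).1 _ hix ha
      rcases lt_or_eq_of_le hij with h' | h'
      · rw [hjymin i h'] at hy; exact nomatch hy
      · rw [h'] at hy; rw [hjy] at hy; exact hb (Option.some_injective _ hy)
    · have hx : f j x = some a := (hii j x y a b hR).2 _ hjy hb
      rw [hixmin j hij] at hx; exact nomatch hx
  · intro x y g hR
    obtain ⟨i, hix, hixmin⟩ := hF x
    obtain ⟨j, hjy, hjymin⟩ := hF y
    rcases le_or_gt i j with hij | hij
    · have hy : f i y = some (g (F x)) := (hiii i x y g hR).1 _ hix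
      rcases lt_or_eq_of_le hij with h' | h'
      · rw [hjymin i h'] at hy; exact nomatch hy
      · rw [h', hjy] at hy; exact Option.some_injective _ hy
    · have hx : f j x = some (g.symm (F y)) := (hiii j x y g hR).2 _ hjy
      rw [hixmin j hij] at hx; exact nomatch hx
end
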